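/- Let h be analytic on 𝔻 with h(0) = 0, h'(0) = 1, and Re(1 + z h''(z)/h'(z)) > α on 𝔻 for some 0 ≤ α < 1. Then for |z| = r < 1, 1/(1+r)^{2(1-α)} ≤ |h'(z)| ≤ 1/(1-r)^{2(1-α)}. -/

import Mathlib

open Complex Metric Filter

lemma moebius_re_bound {W : ℂ} {s : ℝ} (hWs : ‖W‖ ≤ s) (hs1 : s < 1) :
    (1 - s) / (1 + s) ≤ ((1 + W) / (1 - W)).re ∧
      ((1 + W) / (1 - W)).re ≤ (1 + s) / (1 - s) := by
  have hρ0 : 0 ≤ ‖W‖ := norm_nonneg _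
  set ρ := ‖W‖ with hρ
  have hs0 : 0 ≤ s := le_trans hρ0 hWs
  have hρ1 : ρ < 1 := lt_of_le_of_lt hWs hs1
  have hwne : (1 : ℂ) - W ≠ 0 := by
    intro h0
    have h1 : W = 1 := by linear_combination -h0
    rw [h1] at hρ; simp at hρ; rw [hρ] at hρ1; linarith
  have hNpos : 0 < Complex.normSq (1 - W) := Complex.normSq_pos.2 hwne
  have hreq : ((1 + W) / (1 - W)).re = (1 - ρ ^ 2) / Complex.normSq (1 - W) := by
    rw [Complex.div_re, hρ, ← Complex.sq_norm]
    simp only [Complex.add_re, Complex.add_im, Complex.sub_re, Complex.sub_im,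
      Complex.one_re, Complex.one_im, Complex.normSq_apply, Complex.sq_norm]
    ring
  have hub : ‖1 - W‖ ≤ 1 + ρ := by
    calc ‖1 - W‖ ≤ ‖(1:ℂ)‖ + ‖W‖ := norm_sub_le 1 W
      _ = 1 + ρ := by simp [hρ]
  have hlb : 1 - ρ ≤ ‖1 - W‖ := by
    have := norm_sub_norm_le (1 : ℂ) W
    simpa [hρ] using this
  have habs : Complex.normSq (1 - W) = ‖1 - W‖ ^ 2 := (Complex.sq_norm _).symm
  have hNub : Complex.normSq (1 - W) ≤ (1 + ρ) ^ 2 := by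
    rw [habs]; nlinarith [norm_nonneg (1 - W)]
  have hNlb : (1 - ρ) ^ 2 ≤ Complex.normSq (1 - W) := by
    rw [habs]; nlinarith [norm_nonneg (1 - W)]
  rw [hreq]
  constructor
  · rw [div_le_div_iff₀ (by linarith) hNpos]
    nlinarith
  · rw [div_le_div_iff₀ hNpos (by linarith)]
    nlinarith

lemma caratheodory_bound {q : ℂ → ℂ} (hq : DifferentiableOn ℂ q (ball (0:ℂ) 1))
    (hq0 : q 0 = 1) (hre : ∀ z ∈ ball (0:ℂ) 1, 0 < (q z).re)
    {z : ℂ} (hz : z ∈ ball (0:ℂ) 1) :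
    (1 - ‖z‖) / (1 + ‖z‖) ≤ (q z).re ∧
      (q z).re ≤ (1 + ‖z‖) / (1 - ‖z‖) := by
  set w : ℂ → ℂ := fun u => (q u - 1) / (q u + 1) with hw
  have hq1 : ∀ u ∈ ball (0:ℂ) 1, q u + 1 ≠ 0 := by
    intro u hu h0
    have h2 : (q u + 1).re > 1 := by
      simp only [Complex.add_re, Complex.one_re]; linarith [hre u hu]
    rw [h0] at h2; simp at h2; linarith
  have hwd : DifferentiableOn ℂ w (ball (0:ℂ) 1) :=
    (hq.sub (differentiableOn_const 1)).div (hq.add (differentiableOn_const 1)) hq1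
  have hwlt : ∀ u ∈ ball (0:ℂ) 1, ‖w u‖ < 1 := by
    intro u hu
    have h1 : ‖q u - 1‖ < ‖q u + 1‖ := by
      have hsq : ‖q u - 1‖ ^ 2 < ‖q u + 1‖ ^ 2 := by
        rw [Complex.sq_norm, Complex.sq_norm]
        simp only [Complex.normSq_apply, Complex.add_re, Complex.add_im, Complex.sub_re,
          Complex.sub_im, Complex.one_re, Complex.one_im]
        nlinarith [hre u hu]
      exact lt_of_pow_lt_pow_left₀ 2 (norm_nonneg _) hsq
    rw [hw]; simp only
    rw [norm_div, div_lt_one (norm_pos_iff.2 (hq1 u hu))]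
    exact h1
  have hw0 : w 0 = 0 := by simp [hw, hq0]
  have hmaps : Set.MapsTo w (ball (0:ℂ) 1) (ball (0:ℂ) 1) := fun u hu =>
    mem_ball_zero_iff.2 (hwlt u hu)
  have hzlt : ‖z‖ < 1 := mem_ball_zero_iff.1 hz
  have hschwarz : ‖w z‖ ≤ ‖z‖ :=
    Complex.norm_le_norm_of_mapsTo_ball hwd (hmaps.mono_right ball_subset_closedBall) hw0 hzlt
  have hwne : (1 : ℂ) - w z ≠ 0 := by
    intro h0
    have h1 : w z = 1 := by linear_combination -h0
    have h2 := hwlt z hz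
    rw [h1] at h2; simp at h2
  have hqw : q z = (1 + w z) / (1 - w z) := by
    have hwz : w z = (q z - 1) / (q z + 1) := rfl
    rw [eq_div_iff hwne, hwz]
    field_simp [hq1 z hz]
    ring
  rw [hqw]
  exact moebius_re_bound hschwarz hzlt

lemma deriv_ne_zero_aux {f : ℂ → ℂ} (hf : AnalyticOnNhd ℂ f (ball (0:ℂ) 1))
    (hf0 : f 0 = 1) {α : ℝ} (hα : 0 ≤ α)
    (hre : ∀ z ∈ ball (0:ℂ) 1, α < (1 + z * deriv f z / f z).re) :
    ∀ z ∈ ball (0:ℂ) 1, f z ≠ 0 := by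
  intro z₀ hz₀ hfz₀
  have hA : AnalyticAt ℂ f z₀ := hf z₀ hz₀
  by_cases htop : analyticOrderAt f z₀ = ⊤
  · -- identity theorem: f ≡ 0 contradicts f 0 = 1
    have hev : f =ᶠ[nhds z₀] 0 := analyticOrderAt_eq_top.1 htop
    have := hf.eqOn_zero_of_preconnected_of_eventuallyEq_zero
      (convex_ball (0:ℂ) 1).isPreconnected hz₀ hev (mem_ball_self one_pos)
    rw [hf0] at this; exact one_ne_zero this
  · obtain ⟨n, hn⟩ := WithTop.ne_top_iff_exists.1 htop
    obtain ⟨g, hg, hgne, hev⟩ := (hA.analyticOrderAt_eq_natCast (n := n)).1 hn.symm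
    have hz₀ne : z₀ ≠ 0 := by rintro rfl; rw [hf0] at hfz₀; exact one_ne_zero hfz₀
    have hn1 : 1 ≤ n := by
      rcases Nat.eq_zero_or_pos n with h0 | h; swap; · exact h
      exfalso
      have := hev.self_of_nhds
      rw [h0] at this; simp at this
      rw [this] at hfz₀; exact hgne hfz₀
    obtain ⟨m, rfl⟩ : ∃ m, n = m + 1 := ⟨n - 1, (Nat.succ_pred_eq_of_pos hn1).symm⟩
    set r0 := ‖z₀‖ with hr0
    have hr0pos : 0 < r0 := norm_pos_iff.2 hz₀ne
    have hr0lt : r0 < 1 := mem_ball_zero_iff.1 hz₀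
    -- continuity bound for z * g'/g
    set M : ℝ := (z₀ * deriv g z₀ / g z₀).re + 1 with hM
    have hdgc : ContinuousAt (deriv g) z₀ := by
      have h1 := hg.eventually_analyticAt
      rw [Metric.eventually_nhds_iff] at h1
      obtain ⟨ρ, hρ, hballρ⟩ := h1
      have h2 : AnalyticOnNhd ℂ g (ball z₀ ρ) := fun y hy => hballρ (mem_ball.1 hy)
      exact (h2.deriv z₀ (mem_ball_self hρ)).continuousAt
    have hGc : ContinuousAt (fun z => (z * deriv g z / g z).re) z₀ := by
      apply Complex.continuous_re.continuousAt.comp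
      exact (continuousAt_id.mul hdgc).div hg.continuousAt hgne
    have hMev : ∀ᶠ z in nhds z₀, (z * deriv g z / g z).re < M :=
      hGc.eventually_lt_const (by rw [hM]; linarith)
    have hgne_ev : ∀ᶠ z in nhds z₀, g z ≠ 0 := hg.continuousAt.eventually_ne hgne
    have hgan_ev : ∀ᶠ z in nhds z₀, AnalyticAt ℂ g z := hg.eventually_analyticAt
    have hev' : ∀ᶠ z in nhds z₀, f =ᶠ[nhds z] fun u => (u - z₀) ^ (m+1) • g u :=
      hev.eventually_nhds
    have hall := hMev.and (hgne_ev.and (hgan_ev.and hev'))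
    rw [Metric.eventually_nhds_iff] at hall
    obtain ⟨ε, hε, hball⟩ := hall
    -- choose t
    set B : ℝ := max (2 + M - α) 1 with hB
    have hBpos : (0:ℝ) < B := lt_of_lt_of_le one_pos (le_max_right _ _)
    set t : ℝ := min (1 / (2 * B)) (ε / (2 * r0)) with htdef
    have ht0 : 0 < t := lt_min (by positivity) (by positivity)
    have ht1 : t < 1 := by
      have h1 : t ≤ 1 / (2 * B) := min_le_left _ _
      have : 1 / (2 * B) ≤ 1 / 2 := by
        apply one_div_le_one_div_of_le; norm_num
        linarith [le_max_right (2 + M - α) (1:ℝ)]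
      linarith
    set z : ℂ := ((1:ℂ) - (t:ℂ)) * z₀ with hzdef
    have hzball : z ∈ ball (0:ℂ) 1 := by
      rw [mem_ball_zero_iff, hzdef, norm_mul]
      have h1 : ‖(1:ℂ) - (t:ℂ)‖ = 1 - t := by
        rw [← Complex.ofReal_one, ← Complex.ofReal_sub, Complex.norm_real, Real.norm_eq_abs,
          abs_of_pos (by linarith)]
      rw [h1, ← hr0]
      nlinarith
    have hdist : dist z z₀ < ε := by
      have h1 : z - z₀ = -(t:ℂ) * z₀ := by rw [hzdef]; ring
      rw [dist_eq_norm, h1, norm_mul, norm_neg, Complex.norm_real, Real.norm_eq_abs, abs_of_pos ht0, ← hr0]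
      have h2 : t ≤ ε / (2 * r0) := min_le_right _ _
      calc t * r0 ≤ (ε / (2 * r0)) * r0 := by nlinarith
        _ = ε / 2 := by field_simp
        _ < ε := by linarith
    obtain ⟨hMz, hgz, hganz, hfeq⟩ := hball hdist
    -- compute deriv f z and f z
    have hAz : z - z₀ = -(t:ℂ) * z₀ := by rw [hzdef]; ring
    have hAne : z - z₀ ≠ 0 := by
      rw [hAz]
      exact mul_ne_zero (neg_ne_zero.2 (Complex.ofReal_ne_zero.2 ht0.ne')) hz₀ne
    have hfz : f z = (z - z₀) ^ (m+1) * g z := by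
      have := hfeq.self_of_nhds; simpa [smul_eq_mul] using this
    have hd : HasDerivAt (fun u => (u - z₀) ^ (m+1) * g u)
        ((m+1 : ℕ) * (z - z₀) ^ m * 1 * g z + (z - z₀) ^ (m+1) * deriv g z) z := by
      have h1 : HasDerivAt (fun u : ℂ => (u - z₀) ^ (m+1)) ((m+1 : ℕ) * (z - z₀) ^ m * 1) z := by
        exact (((hasDerivAt_id z).sub_const z₀).pow (m+1)).congr_deriv (by simp)
      exact h1.mul hganz.differentiableAt.hasDerivAt
    have hderiv : deriv f z =
        (m+1 : ℕ) * (z - z₀) ^ m * g z + (z - z₀) ^ (m+1) * deriv g z := by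
      rw [hfeq.deriv_eq]
      have := hd.deriv
      simpa using this
    -- key computation
    have key : z * deriv f z / f z
        = ((-(((m:ℝ)+1) * (1 - t) / t) : ℝ) : ℂ) + z * deriv g z / g z := by
      rw [hderiv, hfz, hzdef, hAz]
      have htC : (t:ℂ) ≠ 0 := Complex.ofReal_ne_zero.2 ht0.ne'
      have hgC : g z ≠ 0 := hgz
      have hgC' : g (((1:ℂ) - (t:ℂ)) * z₀) ≠ 0 := hgz
      have hpow : (-(t:ℂ) * z₀) ^ m ≠ 0 := pow_ne_zero _ (by
        exact mul_ne_zero (neg_ne_zero.2 htC) hz₀ne)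
      push_cast
      field_simp
      ring
    have hre2 := hre z hzball
    rw [key] at hre2
    have hre3 : (1 + (((-(((m:ℝ)+1) * (1 - t) / t) : ℝ) : ℂ) + z * deriv g z / g z)).re
        = 1 + (-(((m:ℝ)+1) * (1 - t) / t)) + (z * deriv g z / g z).re := by
      simp [Complex.add_re, Complex.ofReal_re]; ring
    rw [hre3] at hre2
    -- contradiction
    have hfrac : (1 - t) / t ≥ B := by
      have h1 : t ≤ 1 / (2 * B) := min_le_left _ _
      rw [ge_iff_le, le_div_iff₀ ht0]
      have h2 : t * B ≤ (1 / (2 * B)) * B := by nlinarith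
      have h3 : (1 / (2 * B)) * B = 1 / 2 := by field_simp
      have ht12 : t ≤ 1 / 2 := by
        have : 1 / (2 * B) ≤ 1 / 2 := by
          apply one_div_le_one_div_of_le; norm_num
          linarith [le_max_right (2 + M - α) (1:ℝ)]
        linarith [min_le_left (1 / (2 * B)) (ε / (2 * r0))]
      nlinarith
    have hm0 : (0:ℝ) ≤ (m:ℝ) := Nat.cast_nonneg m
    have hBge : 2 + M - α ≤ B := le_max_left _ _
    have hfr0 : 0 ≤ (1 - t)/t := div_nonneg (by linarith) ht0.le
    have : ((m:ℝ)+1) * ((1 - t) / t) ≥ (1 - t)/t := by nlinarith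
    clear_value z t B M r0
    rw [mul_div_assoc] at hre2
    have hX : (1:ℝ) * ((1 - t) / t) ≤ ((m:ℝ) + 1) * ((1 - t) / t) := by
      apply mul_le_mul_of_nonneg_right _ hfr0
      linarith
    rw [one_mul] at hX
    linarith [hMz, hre2, hX, hfrac, hBge]

section aux

lemma aux_log_normSq_deriv {F : ℝ → ℂ} {d : ℂ} {t : ℝ} (hF : HasDerivAt F d t)
    (hne : F t ≠ 0) :
    HasDerivAt (fun s => Real.log (Complex.normSq (F s)) / 2) ((d / F t).re) t := by
  have hre : HasDerivAt (fun s => (F s).re) d.re t := by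
    exact Complex.reCLM.hasFDerivAt.comp_hasDerivAt t hF
  have him : HasDerivAt (fun s => (F s).im) d.im t := by
    exact Complex.imCLM.hasFDerivAt.comp_hasDerivAt t hF
  have hnsq : HasDerivAt (fun s => Complex.normSq (F s))
      ((d.re * (F t).re + (F t).re * d.re) + (d.im * (F t).im + (F t).im * d.im)) t := by
    have := (hre.mul hre).add (him.mul him)
    refine HasDerivAt.congr_of_eventuallyEq this ?_
    filter_upwards with s
    rw [Complex.normSq_apply]; rfl
  have hnsqne : Complex.normSq (F t) ≠ 0 := by
    simpa [Complex.normSq_eq_zero] using hne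
  have hlog := (hnsq.log hnsqne).div_const 2
  refine hlog.congr_deriv ?_
  rw [Complex.div_re, Complex.normSq_apply]
  rw [Complex.normSq_apply] at hnsqne
  field_simp
  ring

end aux

theorem stmt_11 (α : ℝ) (hα : 0 ≤ α ∧ α < 1)
    (h : ℂ → ℂ)
    (hhA : AnalyticOnNhd ℂ h (ball (0 : ℂ) 1))
    (h0 : h 0 = 0) (h1 : deriv h 0 = 1)
    (hconv : ∀ z ∈ ball (0 : ℂ) 1,
      α < (1 + z * deriv (deriv h) z / deriv h z).re) :
    ∀ z ∈ ball (0 : ℂ) 1,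
      1 / (1 + ‖z‖) ^ (2 * (1 - α)) ≤ ‖deriv h z‖ ∧
      ‖deriv h z‖ ≤ 1 / (1 - ‖z‖) ^ (2 * (1 - α)) := by
  obtain ⟨hα0, hα1⟩ := hα
  have hαne : (1:ℝ) - α ≠ 0 := by linarith
  have hαpos : (0:ℝ) < 1 - α := by linarith
  have hfA : AnalyticOnNhd ℂ (deriv h) (ball (0:ℂ) 1) := hhA.deriv
  have hf'A : AnalyticOnNhd ℂ (deriv (deriv h)) (ball (0:ℂ) 1) := hfA.deriv
  have hne : ∀ z ∈ ball (0:ℂ) 1, deriv h z ≠ 0 := deriv_ne_zero_aux hfA h1 hα0 hconv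
  -- the Carathéodory function
  set q : ℂ → ℂ := fun z =>
    (1 + z * deriv (deriv h) z / deriv h z - (α:ℂ)) / (((1 - α : ℝ)):ℂ) with hqdef
  have hq0 : q 0 = 1 := by
    rw [hqdef]
    simp only [zero_mul, zero_div, add_zero]
    rw [div_eq_one_iff_eq (Complex.ofReal_ne_zero.2 hαne)]
    push_cast; ring
  have hqre : ∀ z, (q z).re
      = ((1 + z * deriv (deriv h) z / deriv h z).re - α) / (1 - α) := by
    intro z
    rw [hqdef]
    simp only [Complex.div_ofReal_re, Complex.sub_re, Complex.ofReal_re]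
  have hqpos : ∀ z ∈ ball (0:ℂ) 1, 0 < (q z).re := by
    intro z hz
    rw [hqre]
    have := hconv z hz
    apply div_pos (by linarith) hαpos
  have hqd : DifferentiableOn ℂ q (ball (0:ℂ) 1) := by
    apply DifferentiableOn.div_const
    apply DifferentiableOn.sub _ (differentiableOn_const _)
    apply DifferentiableOn.add (differentiableOn_const _)
    exact (differentiableOn_id.mul hf'A.differentiableOn).div
      hfA.differentiableOn hne
  -- real part bounds for z f''/f'
  have hkey : ∀ z ∈ ball (0:ℂ) 1,
      (z * deriv (deriv h) z / deriv h z).re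
        = (1 - α) * (q z).re + α - 1 := by
    intro z hz
    rw [hqre]
    have h2 : (1 + z * deriv (deriv h) z / deriv h z).re
        = 1 + (z * deriv (deriv h) z / deriv h z).re := by
      simp [Complex.add_re]
    rw [h2]
    field_simp
    ring
  have hbound : ∀ z ∈ ball (0:ℂ) 1,
      -(2 * (1 - α) * ‖z‖ / (1 + ‖z‖))
        ≤ (z * deriv (deriv h) z / deriv h z).re ∧
      (z * deriv (deriv h) z / deriv h z).re
        ≤ 2 * (1 - α) * ‖z‖ / (1 - ‖z‖) := by
    intro z hz
    obtain ⟨hc1, hc2⟩ := caratheodory_bound hqd hq0 hqpos hz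
    have hs0 : 0 ≤ ‖z‖ := norm_nonneg z
    have hs1 : ‖z‖ < 1 := mem_ball_zero_iff.1 hz
    rw [hkey z hz]
    set s := ‖z‖
    set Q := (q z).re
    constructor
    · rw [div_le_iff₀ (by linarith : (0:ℝ) < 1 + s)] at hc1
      rw [neg_le, le_div_iff₀ (by linarith : (0:ℝ) < 1 + s)]
      nlinarith [mul_nonneg hαpos.le (by linarith : (0:ℝ) ≤ Q * (1 + s) - (1 - s))]
    · rw [le_div_iff₀ (by linarith : (0:ℝ) < 1 - s)] at hc2
      rw [le_div_iff₀ (by linarith : (0:ℝ) < 1 - s)]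
      nlinarith [mul_nonneg hαpos.le (by linarith : (0:ℝ) ≤ (1 + s) - Q * (1 - s))]
  -- main argument
  intro z₀ hz₀
  rcases eq_or_ne z₀ 0 with rfl | hz₀ne
  · simp only [norm_zero, add_zero, sub_zero, Real.one_rpow, h1, norm_one, one_div, inv_one]
    exact ⟨le_refl 1, le_refl 1⟩
  set r := ‖z₀‖ with hrdef
  have hr0 : 0 < r := norm_pos_iff.2 hz₀ne
  have hr1 : r < 1 := mem_ball_zero_iff.1 hz₀
  -- the path and the log function
  have hmem : ∀ t ∈ Set.Icc (0:ℝ) 1, ((t:ℂ) * z₀) ∈ ball (0:ℂ) 1 := by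
    intro t ht
    rw [mem_ball_zero_iff, norm_mul, Complex.norm_real, Real.norm_eq_abs, ← hrdef,
      _root_.abs_of_nonneg ht.1]
    nlinarith [ht.2, hr1, hr0, ht.1]
  set G : ℝ → ℝ := fun t => Real.log (Complex.normSq (deriv h ((t:ℂ) * z₀))) / 2 with hGdef
  set D : ℝ → ℝ := fun t =>
    ((deriv (deriv h) ((t:ℂ) * z₀) * z₀) / deriv h ((t:ℂ) * z₀)).re with hDdef
  have hGd : ∀ t ∈ Set.Icc (0:ℝ) 1, HasDerivAt G (D t) t := by
    intro t ht
    have hmt := hmem t ht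
    have hF : HasDerivAt (fun w : ℂ => deriv h (w * z₀))
        (deriv (deriv h) ((t:ℂ) * z₀) * z₀) (t:ℂ) := by
      have hd1 : HasDerivAt (deriv h) (deriv (deriv h) ((t:ℂ) * z₀)) ((t:ℂ) * z₀) :=
        ((hfA _ hmt).differentiableAt).hasDerivAt
      have hd2 : HasDerivAt (fun w : ℂ => w * z₀) z₀ (t:ℂ) := by
        simpa using (hasDerivAt_id ((t:ℂ))).mul_const z₀
      exact hd1.comp (t:ℂ) hd2
    have hγ : HasDerivAt (fun s : ℝ => deriv h ((s:ℂ) * z₀))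
        (deriv (deriv h) ((t:ℂ) * z₀) * z₀) t := hF.comp_ofReal
    exact aux_log_normSq_deriv hγ (hne _ hmt)
  -- relate D to the bound
  have hDbound : ∀ t ∈ Set.Ioo (0:ℝ) 1,
      -(2 * (1 - α) * r / (1 + t * r)) ≤ D t ∧ D t ≤ 2 * (1 - α) * r / (1 - t * r) := by
    intro t ht
    have hmt := hmem t ⟨ht.1.le, ht.2.le⟩
    have habs : ‖(t:ℂ) * z₀‖ = t * r := by
      rw [norm_mul, Complex.norm_real, Real.norm_eq_abs, abs_of_pos ht.1]
    obtain ⟨hb1, hb2⟩ := hbound _ hmt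
    rw [habs] at hb1 hb2
    have hDt : t * D t = ((t:ℂ) * z₀ * deriv (deriv h) ((t:ℂ) * z₀)
        / deriv h ((t:ℂ) * z₀)).re := by
      rw [hDdef]
      have : (t:ℂ) * z₀ * deriv (deriv h) ((t:ℂ) * z₀) / deriv h ((t:ℂ) * z₀)
          = (t:ℂ) * ((deriv (deriv h) ((t:ℂ) * z₀) * z₀) / deriv h ((t:ℂ) * z₀)) := by
        ring
      rw [this, Complex.re_ofReal_mul]
    rw [← hDt] at hb1 hb2
    have htr0 : 0 < 1 + t * r := by nlinarith [mul_pos ht.1 hr0]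
    have htr1 : 0 < 1 - t * r := by nlinarith [mul_lt_of_lt_one_left hr0 ht.2]
    constructor
    · have heq : -(2 * (1 - α) * (t * r) / (1 + t * r))
          = t * (-(2 * (1 - α) * r / (1 + t * r))) := by ring
      rw [heq] at hb1
      exact (mul_le_mul_iff_right₀ ht.1).1 hb1
    · have heq : 2 * (1 - α) * (t * r) / (1 - t * r)
          = t * (2 * (1 - α) * r / (1 - t * r)) := by ring
      rw [heq] at hb2
      exact (mul_le_mul_iff_right₀ ht.1).1 hb2
  -- endpoints of G
  have hG0 : G 0 = 0 := by
    rw [hGdef]; simp [h1]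
  have hG1 : G 1 = Real.log ‖deriv h z₀‖ := by
    rw [hGdef]
    simp only [Complex.ofReal_one, one_mul]
    rw [← Complex.sq_norm, Real.log_pow]
    push_cast; ring
  have habspos : 0 < ‖deriv h z₀‖ := norm_pos_iff.2 (hne z₀ hz₀)
  constructor
  · -- lower bound via H t = G t + 2(1-α) log(1+t r)
    set H : ℝ → ℝ := fun t => G t + 2 * (1 - α) * Real.log (1 + t * r) with hHdef
    have hHmono : MonotoneOn H (Set.Icc (0:ℝ) 1) := by
      apply monotoneOn_of_hasDerivWithinAt_nonneg (convex_Icc 0 1)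
        (f' := fun t => D t + 2 * (1 - α) * (r / (1 + t * r)))
      · intro t ht
        have h2 : HasDerivAt (fun t : ℝ => 1 + t * r) r t := by
          simpa using ((hasDerivAt_id t).mul_const r).const_add 1
        have h3 : (0:ℝ) < 1 + t * r := by nlinarith [ht.1, ht.2, hr0, hr1]
        exact (((hGd t ht).add (((h2.log h3.ne').const_mul (2 * (1 - α))))).continuousAt).continuousWithinAt
      · rw [interior_Icc]
        intro t ht
        have h2 : HasDerivAt (fun t : ℝ => 1 + t * r) r t := by
          simpa using ((hasDerivAt_id t).mul_const r).const_add 1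
        have h3 : (0:ℝ) < 1 + t * r := by nlinarith [ht.1, ht.2]
        exact (((hGd t ⟨ht.1.le, ht.2.le⟩).add
          ((h2.log h3.ne').const_mul (2 * (1 - α)))).hasDerivWithinAt)
      · rw [interior_Icc]
        intro t ht
        have := (hDbound t ht).1
        have h3 : (0:ℝ) < 1 + t * r := by nlinarith [ht.1, ht.2]
        have h4 : 0 ≤ 2 * (1 - α) * (r / (1 + t * r)) := by positivity
        have h5 : 2 * (1 - α) * (r / (1 + t * r)) = 2 * (1 - α) * r / (1 + t * r) := by
          ring
        linarith [this, h5 ▸ h4]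
    have hH01 := hHmono (Set.mem_Icc.2 ⟨le_refl 0, zero_le_one⟩)
      (Set.mem_Icc.2 ⟨zero_le_one, le_refl 1⟩) zero_le_one
    rw [hHdef] at hH01
    simp only [zero_mul, add_zero, Real.log_one, mul_zero, one_mul] at hH01
    rw [hG0, hG1] at hH01
    -- hH01 : 0 ≤ log |f'| + 2(1-α) log(1+r)
    have hlogle : Real.log (1 / (1 + r) ^ (2 * (1 - α)))
        ≤ Real.log ‖deriv h z₀‖ := by
      rw [one_div, Real.log_inv, Real.log_rpow (by linarith : (0:ℝ) < 1 + r)]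
      linarith
    have hpow : (0:ℝ) < 1 / (1 + r) ^ (2 * (1 - α)) := by positivity
    exact (Real.log_le_log_iff hpow habspos).1 hlogle
  · -- upper bound via K t = G t + 2(1-α) log(1 - t r)
    set K : ℝ → ℝ := fun t => G t + 2 * (1 - α) * Real.log (1 - t * r) with hKdef
    have hKanti : AntitoneOn K (Set.Icc (0:ℝ) 1) := by
      apply antitoneOn_of_hasDerivWithinAt_nonpos (convex_Icc 0 1)
        (f' := fun t => D t + 2 * (1 - α) * (-r / (1 - t * r)))
      · intro t ht
        have h2 : HasDerivAt (fun t : ℝ => 1 - t * r) (-r) t := by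
          simpa using ((hasDerivAt_id t).mul_const r).const_sub 1
        have h3 : (0:ℝ) < 1 - t * r := by nlinarith [ht.1, ht.2]
        exact (((hGd t ht).add (((h2.log h3.ne').const_mul (2 * (1 - α))))).continuousAt).continuousWithinAt
      · rw [interior_Icc]
        intro t ht
        have h2 : HasDerivAt (fun t : ℝ => 1 - t * r) (-r) t := by
          simpa using ((hasDerivAt_id t).mul_const r).const_sub 1
        have h3 : (0:ℝ) < 1 - t * r := by nlinarith [ht.1, ht.2]
        exact (((hGd t ⟨ht.1.le, ht.2.le⟩).add
          ((h2.log h3.ne').const_mul (2 * (1 - α)))).hasDerivWithinAt)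
      · rw [interior_Icc]
        intro t ht
        have := (hDbound t ht).2
        have h3 : (0:ℝ) < 1 - t * r := by nlinarith [ht.1, ht.2]
        have h5 : 2 * (1 - α) * (-r / (1 - t * r)) = -(2 * (1 - α) * r / (1 - t * r)) := by
          ring
        rw [h5]
        linarith
    have hK01 := hKanti (Set.mem_Icc.2 ⟨le_refl 0, zero_le_one⟩)
      (Set.mem_Icc.2 ⟨zero_le_one, le_refl 1⟩) zero_le_one
    rw [hKdef] at hK01
    simp only [zero_mul, sub_zero, Real.log_one, mul_zero, one_mul] at hK01
    rw [hG0, hG1] at hK01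
    have hlogle : Real.log ‖deriv h z₀‖
        ≤ Real.log (1 / (1 - r) ^ (2 * (1 - α))) := by
      rw [one_div, Real.log_inv, Real.log_rpow (by linarith : (0:ℝ) < 1 - r)]
      linarith
    have hpow : (0:ℝ) < 1 / (1 - r) ^ (2 * (1 - α)) :=
      div_pos one_pos (Real.rpow_pos_of_pos (by linarith) _)
    exact (Real.log_le_log_iff habspos hpow).1 hlogle
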